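/- Fix λ > 0 and let x be a BA fixed point. Then x'(0) > 0, for every t ≥ 0 the point (x(t), x'(t)) lies in the set Δ = {(x₁, x₂) ∈ [0,∞)² : λ(1 − e^{−x₁}) < x₂ < λ} (i.e. φ_λ(x(t)) < x'(t) < λ), the function x' is increasing, and x'(t) → λ as t → ∞. -/

import Mathlib

open MeasureTheory

/-- φ_λ(y) = λ(1 − e^{−y}). -/
noncomputable def baPhi (lam y : ℝ) : ℝ := lam * (1 - Real.exp (-y))

/-- A BA fixed point: x : [0,∞) → [0,∞) with x(0) = 0, subexponential decay
`e^{-as} x(s) → 0` for every a > 0, x not identically 0, and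
x(t) = ∫₀ᵗ e^u (∫_u^∞ φ_λ(x(s)) e^{−s} ds) du for all t ≥ 0. -/
def IsBAFixedPoint (lam : ℝ) (x : ℝ → ℝ) : Prop :=
  (∀ t, 0 ≤ t → 0 ≤ x t) ∧
  x 0 = 0 ∧
  (∀ a : ℝ, 0 < a →
    Filter.Tendsto (fun s => Real.exp (-(a * s)) * x s) Filter.atTop (nhds 0)) ∧
  (∃ t, 0 ≤ t ∧ x t ≠ 0) ∧
  (∀ t, 0 ≤ t →
    x t = ∫ u in (0:ℝ)..t, Real.exp u * ∫ s in Set.Ioi u, baPhi lam (x s) * Real.exp (-s))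

private lemma ba_exp_integral_Ioi (a : ℝ) {b : ℝ} (hb : 0 < b) :
    ∫ s in Set.Ioi a, Real.exp (-(b * s)) = Real.exp (-(b * a)) / b := by
  have hderiv : ∀ s ∈ Set.Ici a,
      HasDerivAt (fun u => -Real.exp (-(b * u)) / b) (Real.exp (-(b * s))) s := by
    intro s _
    have h1 : HasDerivAt (fun u : ℝ => -(b * u)) (-b) s := by
      exact (by simpa using ((hasDerivAt_id s).const_mul b).neg :
        HasDerivAt (-fun y : ℝ => b * y) (-b) s)
    have h2 := h1.exp.neg.div_const b
    refine h2.congr_deriv ?_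
    field_simp
  have hint : IntegrableOn (fun s => Real.exp (-(b * s))) (Set.Ioi a) := by
    have := exp_neg_integrableOn_Ioi a hb
    simpa [neg_mul] using this
  have htend : Filter.Tendsto (fun u => -Real.exp (-(b * u)) / b) Filter.atTop (nhds 0) := by
    have h1 : Filter.Tendsto (fun u : ℝ => b * u) Filter.atTop Filter.atTop :=
      Filter.Tendsto.const_mul_atTop hb Filter.tendsto_id
    have h2 := (Real.tendsto_exp_neg_atTop_nhds_zero.comp h1).neg.div_const b
    simpa using h2
  have := integral_Ioi_of_hasDerivAt_of_tendsto' hderiv hint htend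
  rw [this]; ring

/-- for a BA fixed point, x'(0) > 0, the point (x(t), x'(t)) lies in
Δ = {(x₁,x₂) : φ_λ(x₁) < x₂ < λ} for every t ≥ 0, x' is increasing, and x'(t) → λ. -/
theorem ba_fixed_point_phase_portrait {lam : ℝ} (hlam : 0 < lam) {x : ℝ → ℝ}
    (hx : IsBAFixedPoint lam x) :
    0 < derivWithin x (Set.Ici 0) 0 ∧
    (∀ t, 0 ≤ t →
      baPhi lam (x t) < derivWithin x (Set.Ici 0) t ∧
      derivWithin x (Set.Ici 0) t < lam) ∧
    StrictMonoOn (derivWithin x (Set.Ici 0)) (Set.Ici 0) ∧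
    Filter.Tendsto (derivWithin x (Set.Ici 0)) Filter.atTop (nhds lam) := by
  obtain ⟨hnn, hx0, -, hne, heq⟩ := hx
  set h : ℝ → ℝ := fun s => baPhi lam (x s) * Real.exp (-s) with hh
  -- Basic facts about baPhi
  have phi_nonneg : ∀ y : ℝ, 0 ≤ y → 0 ≤ baPhi lam y := by
    intro y hy
    have h1 : Real.exp (-y) ≤ 1 := by
      simpa using Real.exp_le_exp.mpr (neg_nonpos.mpr hy)
    unfold baPhi; nlinarith
  have phi_lt : ∀ y : ℝ, baPhi lam y < lam := by
    intro y; have := Real.exp_pos (-y); unfold baPhi; nlinarith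
  have phi_mono : ∀ y z : ℝ, y < z → baPhi lam y < baPhi lam z := by
    intro y z hyz
    have := Real.exp_lt_exp.mpr (neg_lt_neg hyz); unfold baPhi; nlinarith
  have phi_zero : baPhi lam 0 = 0 := by simp [baPhi]
  have phi_eq_zero : ∀ y : ℝ, baPhi lam y = 0 → y = 0 := by
    intro y hy
    unfold baPhi at hy
    rcases mul_eq_zero.1 hy with h1 | h1
    · exact absurd h1 hlam.ne'
    · have : Real.exp (-y) = 1 := by linarith
      have := Real.exp_eq_one_iff (-y) |>.1 this
      linarith
  have h_nonneg : ∀ s : ℝ, 0 < s → 0 ≤ h s := fun s hs =>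
    mul_nonneg (phi_nonneg _ (hnn s hs.le)) (Real.exp_nonneg _)
  have h_lt : ∀ s : ℝ, h s < lam * Real.exp (-s) := by
    intro s
    have h1 := phi_lt (x s)
    have h2 := Real.exp_pos (-s)
    simp only [hh]
    nlinarith
  -- measurability bootstrap
  have hg_undef : ∀ u : ℝ, ¬ AEStronglyMeasurable h (volume.restrict (Set.Ioi u)) →
      (∫ s in Set.Ioi u, h s) = 0 := fun u hu =>
    integral_undef fun hint => hu hint.aestronglyMeasurable
  have hmono_meas : ∀ u v : ℝ, u ≤ v → AEStronglyMeasurable h (volume.restrict (Set.Ioi u)) →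
      AEStronglyMeasurable h (volume.restrict (Set.Ioi v)) := fun u v huv hm =>
    hm.mono_measure (Measure.restrict_mono (Set.Ioi_subset_Ioi huv) le_rfl)
  have hmeas : ∀ u : ℝ, 0 ≤ u → AEStronglyMeasurable h (volume.restrict (Set.Ioi u)) := by
    suffices H : AEStronglyMeasurable h (volume.restrict (Set.Ioi (0:ℝ))) by
      intro u hu; exact hmono_meas 0 u hu H
    by_cases hS : ∃ u : ℝ, 0 ≤ u ∧ AEStronglyMeasurable h (volume.restrict (Set.Ioi u))
    · obtain ⟨u₀, hu₀⟩ := hS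
      set S : Set ℝ := {u | 0 ≤ u ∧ AEStronglyMeasurable h (volume.restrict (Set.Ioi u))}
        with hSdef
      have hSne : S.Nonempty := ⟨u₀, hu₀⟩
      have hbdd : BddBelow S := ⟨0, fun u hu => hu.1⟩
      set b := sInf S with hbdef
      have hb0 : 0 ≤ b := le_csInf hSne fun u hu => hu.1
      have habove : ∀ ε : ℝ, 0 < ε →
          AEStronglyMeasurable h (volume.restrict (Set.Ioi (b + ε))) := by
        intro ε hε
        obtain ⟨a, haS, hab⟩ := exists_lt_of_csInf_lt hSne (by linarith : sInf S < b + ε)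
        exact hmono_meas a _ hab.le haS.2
      have hIoib : AEStronglyMeasurable h (volume.restrict (Set.Ioi b)) := by
        have hun : Set.Ioi b = ⋃ n : ℕ, Set.Ioi (b + 1 / (n + 1)) := by
          ext s
          simp only [Set.mem_Ioi, Set.mem_iUnion]
          constructor
          · intro hs
            obtain ⟨n, hn⟩ := exists_nat_one_div_lt (sub_pos.2 hs)
            exact ⟨n, by linarith⟩
          · rintro ⟨n, hn⟩
            have : (0:ℝ) < 1 / (n + 1) := by positivity
            linarith
        rw [hun, aestronglyMeasurable_iUnion_iff]
        intro n
        exact habove _ (by positivity)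
      have gzero : ∀ u : ℝ, 0 ≤ u → u < b → (∫ s in Set.Ioi u, h s) = 0 := by
        intro u h1 h2
        exact hg_undef u fun hm => absurd (csInf_le hbdd ⟨h1, hm⟩) (not_le.2 h2)
      have xzero : ∀ t : ℝ, 0 ≤ t → t ≤ b → x t = 0 := by
        intro t ht htb
        rw [heq t ht, intervalIntegral.integral_of_le ht]
        apply integral_eq_zero_of_ae
        have h1 : ∀ᵐ u : ℝ, u ≠ t := by
          rw [Filter.eventually_iff, mem_ae_iff]
          have : {u : ℝ | u ≠ t}ᶜ = {t} := by ext u; simp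
          rw [this]
          exact measure_singleton t
        filter_upwards [ae_restrict_mem measurableSet_Ioc, ae_restrict_of_ae h1] with u hu hut
        have hub : u < b := lt_of_lt_of_le (lt_of_le_of_ne hu.2 hut) htb
        have := gzero u hu.1.le hub
        simp [this]
      have hIoc0 : AEStronglyMeasurable h (volume.restrict (Set.Ioc 0 b)) := by
        refine (aestronglyMeasurable_const (b := (0:ℝ))).congr ?_
        refine (ae_restrict_iff' measurableSet_Ioc).2 (Filter.Eventually.of_forall ?_)
        intro s hs
        simp [hh, xzero s hs.1.le hs.2, phi_zero]
      rw [← Set.Ioc_union_Ioi_eq_Ioi hb0, aestronglyMeasurable_union_iff]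
      exact ⟨hIoc0, hIoib⟩
    · exfalso
      push_neg at hS
      obtain ⟨t₀, ht₀, hxt₀⟩ := hne
      apply hxt₀
      rw [heq t₀ ht₀]
      have hEq : Set.EqOn (fun u => Real.exp u * ∫ s in Set.Ioi u, h s) 0 (Set.uIcc 0 t₀) := by
        intro u hu
        rw [Set.uIcc_of_le ht₀] at hu
        have := hg_undef u (hS u hu.1)
        simp [this]
      rw [intervalIntegral.integral_congr hEq]
      simp
  -- integrability
  have hlamint : ∀ u : ℝ, IntegrableOn (fun s => lam * Real.exp (-s)) (Set.Ioi u) := by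
    intro u
    have := (exp_neg_integrableOn_Ioi u one_pos).const_mul lam
    simp only [neg_one_mul] at this; exact this
  have hint : ∀ u : ℝ, 0 ≤ u → IntegrableOn h (Set.Ioi u) := by
    intro u hu
    refine (hlamint u).mono' (hmeas u hu) ?_
    refine (ae_restrict_iff' measurableSet_Ioi).2 (Filter.Eventually.of_forall fun s hs => ?_)
    have hs0 : (0:ℝ) < s := lt_of_le_of_lt hu hs
    rw [Real.norm_eq_abs, abs_of_nonneg (h_nonneg s hs0)]
    exact (h_lt s).le
  -- the primitive machinery
  set h' : ℝ → ℝ := (Set.Ioi (0:ℝ)).indicator h with hh'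
  have h'Int : Integrable h' := (integrable_indicator_iff measurableSet_Ioi).2 (hint 0 le_rfl)
  set P : ℝ → ℝ := fun u => ∫ v in (0:ℝ)..u, h' v with hP
  have Pcont : Continuous P :=
    intervalIntegral.continuous_primitive (fun a b => h'Int.intervalIntegrable) 0
  set C : ℝ := ∫ s in Set.Ioi (0:ℝ), h s with hC
  set E : ℝ → ℝ := fun t => Real.exp t * (C - P t) with hE
  have Econt : Continuous E := Real.continuous_exp.mul (continuous_const.sub Pcont)
  have DEq : ∀ t : ℝ, 0 ≤ t → Real.exp t * ∫ s in Set.Ioi t, h s = E t := by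
    intro u hu
    have hPu : P u = ∫ s in Set.Ioc 0 u, h s := by
      simp only [hP]
      rw [intervalIntegral.integral_of_le hu]
      apply setIntegral_congr_fun measurableSet_Ioc
      intro s hs
      exact Set.indicator_of_mem (Set.mem_Ioi.2 hs.1) h
    have hsplit : (∫ s in Set.Ioc 0 u, h s) + (∫ s in Set.Ioi u, h s) = C := by
      rw [hC, ← Set.Ioc_union_Ioi_eq_Ioi hu,
        setIntegral_union (Set.Ioc_disjoint_Ioi le_rfl) measurableSet_Ioi
          ((hint 0 le_rfl).mono_set Set.Ioc_subset_Ioi_self) (hint u hu)]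
    have : (∫ s in Set.Ioi u, h s) = C - P u := by rw [hPu]; linarith
    rw [this]
  -- x equals the primitive of E
  have xEq : ∀ t : ℝ, 0 ≤ t → x t = ∫ u in (0:ℝ)..t, E u := by
    intro t ht
    rw [heq t ht]
    apply intervalIntegral.integral_congr
    intro u hu
    rw [Set.uIcc_of_le ht] at hu
    exact DEq u hu.1
  have hDeriv : ∀ t : ℝ, 0 ≤ t → HasDerivWithinAt x (E t) (Set.Ici 0) t := by
    intro t ht
    have hX : HasDerivAt (fun r => ∫ u in (0:ℝ)..r, E u) (E t) t :=
      intervalIntegral.integral_hasDerivAt_right (Econt.intervalIntegrable _ _)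
        (Econt.stronglyMeasurableAtFilter _ _) Econt.continuousAt
    exact hX.hasDerivWithinAt.congr (fun u hu => xEq u hu) (xEq t ht)
  have hDW : ∀ t : ℝ, 0 ≤ t → derivWithin x (Set.Ici 0) t = E t := fun t ht =>
    (hDeriv t ht).derivWithin (uniqueDiffOn_Ici 0 t ht)
  have xcont : ContinuousOn x (Set.Ici 0) := by
    have hXc : Continuous (fun r => ∫ u in (0:ℝ)..r, E u) :=
      intervalIntegral.continuous_primitive (fun a b => Econt.intervalIntegrable a b) 0
    exact hXc.continuousOn.congr fun u hu => xEq u hu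
  have Enn : ∀ t : ℝ, 0 ≤ t → 0 ≤ E t := by
    intro t ht
    rw [← DEq t ht]
    refine mul_nonneg (Real.exp_nonneg t) ?_
    exact setIntegral_nonneg measurableSet_Ioi fun s hs => h_nonneg s (lt_of_le_of_lt ht hs)
  have xmono : MonotoneOn x (Set.Ici 0) := by
    intro a ha b hb hab
    rw [Set.mem_Ici] at ha hb
    have hsub : (∫ u in (0:ℝ)..b, E u) - ∫ u in (0:ℝ)..a, E u = ∫ u in a..b, E u :=
      intervalIntegral.integral_interval_sub_left (Econt.intervalIntegrable _ _)
        (Econt.intervalIntegrable _ _)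
    rw [xEq a ha, xEq b hb, ← sub_nonneg, hsub]
    exact intervalIntegral.integral_nonneg hab fun u hu => Enn u (ha.trans hu.1)
  -- strict positivity of E
  have Epos : ∀ t : ℝ, 0 ≤ t → 0 < E t := by
    intro t ht
    rcases (Enn t ht).lt_or_eq with hlt | heq0
    · exact hlt
    · exfalso
      have hI0 : (∫ s in Set.Ioi t, h s) = 0 := by
        have hde := DEq t ht
        have hexp := Real.exp_pos t
        rw [← heq0] at hde
        rcases mul_eq_zero.1 hde with h1 | h1
        · exact absurd h1 hexp.ne'
        · exact h1
      have hIu : ∀ u : ℝ, t ≤ u → (∫ s in Set.Ioi u, h s) = 0 := by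
        intro u hu
        have h1 : 0 ≤ ∫ s in Set.Ioi u, h s :=
          setIntegral_nonneg measurableSet_Ioi fun s hs =>
            h_nonneg s (lt_of_le_of_lt (ht.trans hu) hs)
        have h2 : (∫ s in Set.Ioi u, h s) ≤ ∫ s in Set.Ioi t, h s :=
          setIntegral_mono_set (hint t ht)
            ((ae_restrict_iff' measurableSet_Ioi).2 (Filter.Eventually.of_forall
              fun s hs => h_nonneg s (lt_of_le_of_lt ht hs)))
            (HasSubset.Subset.eventuallyLE (Set.Ioi_subset_Ioi hu))
        linarith
      have hEu : ∀ u : ℝ, t ≤ u → E u = 0 := by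
        intro u hu
        rw [← DEq u (ht.trans hu), hIu u hu, mul_zero]
      have hconst : ∀ s : ℝ, t ≤ s → x s = x t := by
        intro s hs
        have hsplit : (∫ u in (0:ℝ)..s, E u) =
            (∫ u in (0:ℝ)..t, E u) + ∫ u in t..s, E u :=
          (intervalIntegral.integral_add_adjacent_intervals
            (Econt.intervalIntegrable _ _) (Econt.intervalIntegrable _ _)).symm
        have hz : (∫ u in t..s, E u) = 0 := by
          rw [intervalIntegral.integral_of_le hs]
          apply integral_eq_zero_of_ae
          refine (ae_restrict_iff' measurableSet_Ioc).2 (Filter.Eventually.of_forall ?_)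
          intro u hu
          exact hEu u hu.1.le
        rw [xEq s (ht.trans hs), xEq t ht, hsplit, hz, add_zero]
      have hphixt : baPhi lam (x t) = 0 := by
        have hIt : (∫ s in Set.Ioi t, h s) = baPhi lam (x t) * Real.exp (-t) := by
          have hcg : ∀ s ∈ Set.Ioi t, h s = baPhi lam (x t) * Real.exp (-s) := by
            intro s hs
            rw [hh]
            simp only
            rw [hconst s (le_of_lt hs)]
          rw [setIntegral_congr_fun measurableSet_Ioi hcg, integral_const_mul,
            integral_exp_neg_Ioi]
        rw [hIt] at hI0
        rcases mul_eq_zero.1 hI0 with h1 | h1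
        · exact h1
        · exact absurd h1 (Real.exp_pos (-t)).ne'
      have hxt : x t = 0 := phi_eq_zero _ hphixt
      obtain ⟨t₀, ht₀, hxt₀⟩ := hne
      apply hxt₀
      rcases le_total t₀ t with hle | hle
      · have h1 := xmono (Set.mem_Ici.2 ht₀) (Set.mem_Ici.2 ht) hle
        have h2 := hnn t₀ ht₀
        rw [hxt] at h1
        linarith
      · rw [hconst t₀ hle, hxt]
  have xStrict : StrictMonoOn x (Set.Ici 0) := by
    apply strictMonoOn_of_deriv_pos (convex_Ici 0) xcont
    intro t ht
    rw [interior_Ici] at ht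
    have hX : HasDerivAt (fun r => ∫ u in (0:ℝ)..r, E u) (E t) t :=
      intervalIntegral.integral_hasDerivAt_right (Econt.intervalIntegrable _ _)
        (Econt.stronglyMeasurableAtFilter _ _) Econt.continuousAt
    have hxd : HasDerivAt x (E t) t := by
      apply hX.congr_of_eventuallyEq
      filter_upwards [Ici_mem_nhds ht] with u hu using xEq u hu
    rw [hxd.deriv]
    exact Epos t ht.le
  -- upper bound
  have E_lt : ∀ t : ℝ, 0 ≤ t → E t < lam := by
    intro t ht
    have hIlam : (∫ s in Set.Ioi t, lam * Real.exp (-s)) = lam * Real.exp (-t) := by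
      rw [integral_const_mul, integral_exp_neg_Ioi]
    have hpos : 0 < ∫ s in Set.Ioi t, (lam * Real.exp (-s) - h s) := by
      rw [setIntegral_pos_iff_support_of_nonneg_ae
        (Filter.Eventually.of_forall fun s => sub_nonneg.2 (h_lt s).le)
        ((hlamint t).sub (hint t ht))]
      have hsup : Function.support (fun s => lam * Real.exp (-s) - h s) ∩ Set.Ioi t
          = Set.Ioi t :=
        Set.inter_eq_right.2 fun s _ => sub_ne_zero.2 (h_lt s).ne'
      rw [hsup, Real.volume_Ioi]
      simp
    rw [integral_sub (hlamint t) (hint t ht), hIlam] at hpos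
    have hde := DEq t ht
    have h1 := Real.exp_pos t
    have h2 : Real.exp t * Real.exp (-t) = 1 := by
      rw [← Real.exp_add]; simp
    nlinarith [mul_lt_mul_of_pos_left (show (∫ s in Set.Ioi t, h s) < lam * Real.exp (-t)
      by linarith) h1]
  -- lower bound
  have E_gt : ∀ t : ℝ, 0 ≤ t → baPhi lam (x t) < E t := by
    intro t ht
    have hintc : IntegrableOn (fun s => baPhi lam (x t) * Real.exp (-s)) (Set.Ioi t) := by
      have := (exp_neg_integrableOn_Ioi t one_pos).const_mul (baPhi lam (x t))
      simp only [neg_one_mul] at this; exact this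
    have hIphi : (∫ s in Set.Ioi t, baPhi lam (x t) * Real.exp (-s))
        = baPhi lam (x t) * Real.exp (-t) := by
      rw [integral_const_mul, integral_exp_neg_Ioi]
    have hkey : ∀ s : ℝ, s ∈ Set.Ioi t → baPhi lam (x t) * Real.exp (-s) < h s := by
      intro s hs
      rw [Set.mem_Ioi] at hs
      have hxlt : x t < x s := xStrict (Set.mem_Ici.2 ht) (Set.mem_Ici.2 (ht.trans hs.le)) hs
      have := phi_mono _ _ hxlt
      have hep := Real.exp_pos (-s)
      simp only [hh]
      nlinarith
    have hpos : 0 < ∫ s in Set.Ioi t, (h s - baPhi lam (x t) * Real.exp (-s)) := by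
      rw [setIntegral_pos_iff_support_of_nonneg_ae
        ((ae_restrict_iff' measurableSet_Ioi).2 (Filter.Eventually.of_forall
          fun s hs => sub_nonneg.2 (hkey s hs).le))
        ((hint t ht).sub hintc)]
      have hsup : Function.support (fun s => h s - baPhi lam (x t) * Real.exp (-s))
          ∩ Set.Ioi t = Set.Ioi t :=
        Set.inter_eq_right.2 fun s hs => sub_ne_zero.2 (hkey s hs).ne'
      rw [hsup, Real.volume_Ioi]
      simp
    rw [integral_sub (hint t ht) hintc, hIphi] at hpos
    have hde := DEq t ht
    have h1 := Real.exp_pos t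
    have h2 : Real.exp t * Real.exp (-t) = 1 := by
      rw [← Real.exp_add]; simp
    have h3 : Real.exp t * (baPhi lam (x t) * Real.exp (-t)) = baPhi lam (x t) := by
      rw [show Real.exp t * (baPhi lam (x t) * Real.exp (-t))
        = baPhi lam (x t) * (Real.exp t * Real.exp (-t)) by ring, h2, mul_one]
    have h4 := mul_lt_mul_of_pos_left (show baPhi lam (x t) * Real.exp (-t)
      < ∫ s in Set.Ioi t, h s by linarith) h1
    rw [h3, hde] at h4
    exact h4
  -- derivative of E
  have hEderiv : ∀ t : ℝ, 0 < t → HasDerivAt E (E t - baPhi lam (x t)) t := by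
    intro t ht
    have hcx : ContinuousAt x t := (xcont t (le_of_lt ht)).continuousAt (Ici_mem_nhds ht)
    have hch : ContinuousAt h t := by
      have h1 : ContinuousAt (fun y : ℝ => baPhi lam y) (x t) := by
        unfold baPhi; fun_prop
      exact (h1.comp hcx).mul (Real.continuous_exp.continuousAt.comp
        (continuousAt_id.neg))
    have hch' : ContinuousAt h' t := by
      apply hch.congr
      filter_upwards [Ioi_mem_nhds ht] with s hs
      exact (Set.indicator_of_mem hs h).symm
    have hPd : HasDerivAt P (h t) t := by
      have := intervalIntegral.integral_hasDerivAt_right (a := 0) (b := t)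
        (h'Int.intervalIntegrable) (h'Int.aestronglyMeasurable.stronglyMeasurableAtFilter)
        hch'
      rw [hh'] at this
      rwa [Set.indicator_of_mem (Set.mem_Ioi.2 ht) h] at this
    have hGd : HasDerivAt (fun u => C - P u) (-h t) t := hPd.const_sub C
    have := (Real.hasDerivAt_exp t).mul hGd
    have hval : Real.exp t * h t = baPhi lam (x t) := by
      rw [hh]
      simp only
      rw [mul_comm (baPhi lam (x t)), ← mul_assoc, ← Real.exp_add]
      simp
    refine this.congr_deriv ?_
    rw [hE]
    simp only
    rw [mul_neg, hval]
    ring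
  have EStrict : StrictMonoOn E (Set.Ici 0) := by
    apply strictMonoOn_of_deriv_pos (convex_Ici 0) Econt.continuousOn
    intro t ht
    rw [interior_Ici] at ht
    rw [(hEderiv t ht).deriv]
    have := E_gt t ht.le
    have := phi_nonneg (x t) (hnn t ht.le)
    linarith
  -- growth of x
  set c : ℝ := E 0 with hc
  have hcpos : 0 < c := Epos 0 le_rfl
  have xlow : ∀ s : ℝ, 0 ≤ s → c * s ≤ x s := by
    intro s hs
    rw [xEq s hs]
    have h1 : c * s = ∫ _u in (0:ℝ)..s, c := by
      rw [intervalIntegral.integral_const]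
      simp [mul_comm]
    rw [h1]
    apply intervalIntegral.integral_mono_on hs (intervalIntegrable_const)
      (Econt.intervalIntegrable _ _)
    intro u hu
    exact EStrict.monotoneOn (Set.self_mem_Ici) (Set.mem_Ici.2 hu.1) hu.1
  -- asymptotic lower bound for E
  have Elow : ∀ t : ℝ, 0 ≤ t →
      lam * (1 - Real.exp (-(c * t)) / (1 + c)) ≤ E t := by
    intro t ht
    have hc1 : (0:ℝ) < 1 + c := by linarith
    have hfun : ∀ s : ℝ, baPhi lam (c * s) * Real.exp (-s)
        = lam * (Real.exp (-(1 * s)) - Real.exp (-((1 + c) * s))) := by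
      intro s
      unfold baPhi
      rw [show -((1 + c) * s) = -(c * s) + -(1 * s) by ring, Real.exp_add]
      ring_nf
    have hintlow : IntegrableOn (fun s => baPhi lam (c * s) * Real.exp (-s)) (Set.Ioi t) := by
      have h1 : IntegrableOn (fun s => lam * (Real.exp (-(1 * s)) - Real.exp (-((1 + c) * s))))
          (Set.Ioi t) := by
        apply Integrable.const_mul
        exact ((exp_neg_integrableOn_Ioi t one_pos).congr_fun
          (fun s _ => by rw [neg_mul]) measurableSet_Ioi).sub
          ((exp_neg_integrableOn_Ioi t hc1).congr_fun
            (fun s _ => by simp only [neg_mul]) measurableSet_Ioi)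
      exact h1.congr_fun (fun s _ => (hfun s).symm) measurableSet_Ioi
    have hmono2 : ∀ s ∈ Set.Ioi t, baPhi lam (c * s) * Real.exp (-s) ≤ h s := by
      intro s hs
      rw [Set.mem_Ioi] at hs
      have hs0 : 0 ≤ s := ht.trans hs.le
      have hxl := xlow s hs0
      have hphile : baPhi lam (c * s) ≤ baPhi lam (x s) := by
        rcases hxl.lt_or_eq with h' | h'
        · exact (phi_mono _ _ h').le
        · rw [h']
      exact mul_le_mul_of_nonneg_right hphile (Real.exp_nonneg _)
    have hIle : (∫ s in Set.Ioi t, baPhi lam (c * s) * Real.exp (-s))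
        ≤ ∫ s in Set.Ioi t, h s :=
      setIntegral_mono_on hintlow (hint t ht) measurableSet_Ioi hmono2
    have hIc : (∫ s in Set.Ioi t, baPhi lam (c * s) * Real.exp (-s))
        = lam * (Real.exp (-(1 * t)) / 1 - Real.exp (-((1 + c) * t)) / (1 + c)) := by
      rw [setIntegral_congr_fun measurableSet_Ioi (fun s _ => hfun s), integral_const_mul,
        integral_sub
          ((exp_neg_integrableOn_Ioi t one_pos).congr_fun
            (fun s _ => by simp only [neg_mul]) measurableSet_Ioi)
          ((exp_neg_integrableOn_Ioi t hc1).congr_fun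
            (fun s _ => by simp only [neg_mul]) measurableSet_Ioi),
        ba_exp_integral_Ioi t one_pos, ba_exp_integral_Ioi t hc1]
    have hde := DEq t ht
    have h1 := Real.exp_pos t
    have k1 : Real.exp t * Real.exp (-(1 * t)) = 1 := by
      rw [← Real.exp_add]; simp
    have k2 : Real.exp t * Real.exp (-((1 + c) * t)) = Real.exp (-(c * t)) := by
      rw [← Real.exp_add]; ring_nf
    have hmul := mul_le_mul_of_nonneg_left hIle (Real.exp_nonneg t)
    rw [hde, hIc] at hmul
    have hexpand : Real.exp t * (lam * (Real.exp (-(1 * t)) / 1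
        - Real.exp (-((1 + c) * t)) / (1 + c)))
        = lam * (1 - Real.exp (-(c * t)) / (1 + c)) := by
      rw [div_one, show Real.exp t * (lam * (Real.exp (-(1 * t))
          - Real.exp (-((1 + c) * t)) / (1 + c)))
        = lam * ((Real.exp t * Real.exp (-(1 * t)))
          - (Real.exp t * Real.exp (-((1 + c) * t))) / (1 + c)) by ring, k1, k2]
    linarith [hexpand ▸ hmul]
  -- the limit
  have hlim : Filter.Tendsto E Filter.atTop (nhds lam) := by
    have hlow : Filter.Tendsto (fun t => lam * (1 - Real.exp (-(c * t)) / (1 + c)))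
        Filter.atTop (nhds lam) := by
      have h1 : Filter.Tendsto (fun t : ℝ => c * t) Filter.atTop Filter.atTop :=
        Filter.Tendsto.const_mul_atTop hcpos Filter.tendsto_id
      have h2 := ((Real.tendsto_exp_neg_atTop_nhds_zero.comp h1).div_const (1 + c)).const_sub 1
      have h3 := h2.const_mul lam
      simpa using h3
    apply tendsto_of_tendsto_of_tendsto_of_le_of_le' hlow tendsto_const_nhds
    · filter_upwards [Filter.eventually_ge_atTop (0:ℝ)] with t ht using Elow t ht
    · filter_upwards [Filter.eventually_ge_atTop (0:ℝ)] with t ht using (E_lt t ht).le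
  refine ⟨?_, ?_, ?_, ?_⟩
  · rw [hDW 0 le_rfl]; exact Epos 0 le_rfl
  · intro t ht
    rw [hDW t ht]
    exact ⟨E_gt t ht, E_lt t ht⟩
  · intro a ha b hb hab
    rw [hDW a ha, hDW b hb]
    exact EStrict ha hb hab
  · apply hlim.congr'
    filter_upwards [Filter.eventually_ge_atTop (0:ℝ)] with t ht using (hDW t ht).symm
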